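/- Let σ be the smallest nonzero singular value of I − P₀. Then for every s ∈ [0,1], ‖π_s − π₀‖₂ ≤ (2 s n / σ) · ‖π_s (P₁ − P₀)‖₂, where ‖·‖₂ denotes the Euclidean norm on ℝⁿ and π_s(P₁ − P₀) is the row vector obtained by right-multiplying π_s by P₁ − P₀. -/

import Mathlib

open Matrix BigOperators

/-- A row-stochastic matrix: nonnegative entries, each row sums to 1. -/
def IsStochastic {n : ℕ} (P : Matrix (Fin n) (Fin n) ℝ) : Prop :=
  (∀ i j, 0 ≤ P i j) ∧ ∀ i, ∑ j, P i j = 1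

/-- Irreducibility: every state can reach every other state. -/
def MCIrreducible {n : ℕ} (P : Matrix (Fin n) (Fin n) ℝ) : Prop :=
  ∀ i j, ∃ m : ℕ, 0 < (P ^ m) i j

/-- Aperiodicity (for a finite chain): every state has eventually positive return
probabilities. -/
def MCAperiodic {n : ℕ} (P : Matrix (Fin n) (Fin n) ℝ) : Prop :=
  ∀ i : Fin n, ∃ N : ℕ, ∀ m : ℕ, N ≤ m → 0 < (P ^ m) i i

/-- A probability (row) vector. -/
def IsProbVec {n : ℕ} (v : Fin n → ℝ) : Prop :=
  (∀ i, 0 ≤ v i) ∧ ∑ i, v i = 1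

/-- Total variation distance between two vectors. -/
noncomputable def tvDist {n : ℕ} (μ ν : Fin n → ℝ) : ℝ :=
  (1 / 2) * ∑ i, |μ i - ν i|

/-- Euclidean norm on ℝⁿ. -/
noncomputable def euclNorm {n : ℕ} (v : Fin n → ℝ) : ℝ :=
  Real.sqrt (∑ i, (v i) ^ 2)

/-- Mixing time of `P` with stationary distribution `π`. -/
noncomputable def mixingTime {n : ℕ} (P : Matrix (Fin n) (Fin n) ℝ)
    (π : Fin n → ℝ) (ε : ℝ) : ℕ :=
  sInf {T : ℕ | ∀ ν : Fin n → ℝ, IsProbVec ν → tvDist (ν ᵥ* (P ^ T)) π ≤ ε}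

/-- The interpolation `P_t = (1-t)·P₀ + t·P₁`. -/
noncomputable def Pt {n : ℕ} (P₀ P₁ : Matrix (Fin n) (Fin n) ℝ) (t : ℝ) :
    Matrix (Fin n) (Fin n) ℝ :=
  (1 - t) • P₀ + t • P₁

/-- The ordered product `P_{(j+1)/T} P_{(j+2)/T} ⋯ P_{k/T}` (identity if `j ≥ k`). -/
noncomputable def prodSeg {n : ℕ} (P₀ P₁ : Matrix (Fin n) (Fin n) ℝ) (T j k : ℕ) :
    Matrix (Fin n) (Fin n) ℝ :=
  ((List.range (k - j)).map (fun i => Pt P₀ P₁ (((j : ℝ) + (i : ℝ) + 1) / (T : ℝ)))).prod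

/-- The ordered product `P_{1/T} P_{2/T} ⋯ P_{k/T}`. -/
noncomputable def adiabProd {n : ℕ} (P₀ P₁ : Matrix (Fin n) (Fin n) ℝ) (T k : ℕ) :
    Matrix (Fin n) (Fin n) ℝ :=
  prodSeg P₀ P₁ T 0 k

/-- Adiabatic time of the adiabatic evolution between `P₀` and `P₁`,
with `π₁` the stationary distribution of `P₁`. -/
noncomputable def adiabaticTime {n : ℕ} (P₀ P₁ : Matrix (Fin n) (Fin n) ℝ)
    (π₁ : Fin n → ℝ) (ε : ℝ) : ℕ :=
  sInf {T' : ℕ | ∀ T : ℕ, T' ≤ T → ∀ ν : Fin n → ℝ, IsProbVec ν →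
    tvDist ((ν ᵥ* P₀) ᵥ* adiabProd P₀ P₁ T T) π₁ ≤ ε}

/-- Stable adiabatic time, where `π s` is the stationary distribution of `P_s`. -/
noncomputable def stableAdiabaticTime {n : ℕ} (P₀ P₁ : Matrix (Fin n) (Fin n) ℝ)
    (π : ℝ → Fin n → ℝ) (ε : ℝ) : ℕ :=
  sInf {T : ℕ | ∀ k : ℕ, 1 ≤ k → k ≤ T →
    tvDist ((π 0) ᵥ* adiabProd P₀ P₁ T k) (π ((k : ℝ) / (T : ℝ))) < ε}

/-- `t_mix(ε) = sup_{s ∈ [0,1]} t_mix(P_s, ε)`, where `π s` is the stationary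
distribution of `P_s`. -/
noncomputable def maxMixingTime {n : ℕ} (P₀ P₁ : Matrix (Fin n) (Fin n) ℝ)
    (π : ℝ → Fin n → ℝ) (ε : ℝ) : ℕ :=
  sSup {m : ℕ | ∃ s ∈ Set.Icc (0 : ℝ) 1, m = mixingTime (Pt P₀ P₁ s) (π s) ε}

/-- `s` is a singular value of `A`: `s ≥ 0` and `s²` is an eigenvalue of `A Aᵀ`
(for a left eigenvector). -/
def IsSingularValue {n : ℕ} (A : Matrix (Fin n) (Fin n) ℝ) (s : ℝ) : Prop :=
  0 ≤ s ∧ ∃ v : Fin n → ℝ, v ≠ 0 ∧ v ᵥ* (A * Aᵀ) = (s ^ 2) • v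

/-- `σ` is the smallest nonzero (positive) singular value of `A`. -/
def IsSmallestPosSingularValue {n : ℕ} (A : Matrix (Fin n) (Fin n) ℝ) (σ : ℝ) : Prop :=
  0 < σ ∧ IsSingularValue A σ ∧ ∀ s : ℝ, 0 < s → IsSingularValue A s → σ ≤ s

lemma vecMul_apply' {n : ℕ} (x : Fin n → ℝ) (M : Matrix (Fin n) (Fin n) ℝ) (j : Fin n) :
    (x ᵥ* M) j = ∑ i, x i * M i j := rfl

lemma abs_stationary {n : ℕ} (P : Matrix (Fin n) (Fin n) ℝ) (hP : IsStochastic P)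
    (x : Fin n → ℝ) (hx : x ᵥ* P = x) :
    (fun i => |x i|) ᵥ* P = fun i => |x i| := by
  have hle : ∀ j ∈ Finset.univ, |x j| ≤ ((fun i => |x i|) ᵥ* P) j := by
    intro j _
    calc |x j| = |(x ᵥ* P) j| := by rw [hx]
    _ ≤ ∑ i, |x i * P i j| := by
        rw [vecMul_apply']
        exact Finset.abs_sum_le_sum_abs _ _
    _ = ((fun i => |x i|) ᵥ* P) j := by
        rw [vecMul_apply']
        exact Finset.sum_congr rfl fun i _ => by rw [abs_mul, abs_of_nonneg (hP.1 i j)]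
  have hsum : ∑ j, |x j| = ∑ j, ((fun i => |x i|) ᵥ* P) j := by
    simp only [vecMul_apply']
    rw [Finset.sum_comm]
    simp [← Finset.mul_sum, hP.2]
  have := (Finset.sum_eq_sum_iff_of_le hle).1 hsum
  funext j
  exact (this j (Finset.mem_univ j)).symm

lemma stationary_pow {n : ℕ} (P : Matrix (Fin n) (Fin n) ℝ) (x : Fin n → ℝ)
    (hx : x ᵥ* P = x) (m : ℕ) : x ᵥ* (P ^ m) = x := by
  induction m with
  | zero => simp
  | succ m ih => rw [pow_succ, ← vecMul_vecMul, ih, hx]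

lemma pow_entry_nonneg {n : ℕ} (P : Matrix (Fin n) (Fin n) ℝ)
    (hP : ∀ i j, 0 ≤ P i j) (m : ℕ) : ∀ i j, 0 ≤ (P ^ m) i j := by
  induction m with
  | zero => intro i j; rw [pow_zero]; by_cases h : i = j <;> simp [Matrix.one_apply, h]
  | succ m ih =>
      intro i j
      rw [pow_succ, Matrix.mul_apply]
      exact Finset.sum_nonneg fun k _ => mul_nonneg (ih i k) (hP k j)

lemma pos_everywhere {n : ℕ} (P : Matrix (Fin n) (Fin n) ℝ) (hP : IsStochastic P)
    (hirr : MCIrreducible P) (x : Fin n → ℝ) (hx : x ᵥ* P = x)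
    (hx0 : ∀ i, 0 ≤ x i) (i : Fin n) (hi : 0 < x i) : ∀ j, 0 < x j := by
  intro j
  obtain ⟨m, hm⟩ := hirr i j
  have h1 : x j = ∑ k, x k * (P ^ m) k j := by
    conv_lhs => rw [← stationary_pow P x hx m, vecMul_apply']
  rw [h1]
  have : x i * (P ^ m) i j ≤ ∑ k, x k * (P ^ m) k j :=
    Finset.single_le_sum (f := fun k => x k * (P ^ m) k j)
      (fun k _ => mul_nonneg (hx0 k) (pow_entry_nonneg P hP.1 m k j)) (Finset.mem_univ i)
  exact lt_of_lt_of_le (mul_pos hi hm) this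
lemma stationary_unique {n : ℕ} (P : Matrix (Fin n) (Fin n) ℝ) (hP : IsStochastic P)
    (hirr : MCIrreducible P) (p : Fin n → ℝ) (hp : IsProbVec p) (hps : p ᵥ* P = p)
    (x : Fin n → ℝ) (hx : x ᵥ* P = x) : x = (∑ i, x i) • p := by
  set c : ℝ := ∑ i, x i with hc
  set z : Fin n → ℝ := x - c • p with hzdef
  have hzs : z ᵥ* P = z := by
    rw [hzdef, Matrix.sub_vecMul, Matrix.smul_vecMul, hx, hps]
  have hzsum : ∑ i, z i = 0 := by
    simp [hzdef, Finset.sum_sub_distrib, ← Finset.mul_sum, hp.2, hc]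
  have ha : (fun i => |z i|) ᵥ* P = fun i => |z i| := abs_stationary P hP z hzs
  set u : Fin n → ℝ := (fun i => |z i|) - z with hudef
  have hus : u ᵥ* P = u := by rw [hudef, Matrix.sub_vecMul, ha, hzs]
  have hu0 : ∀ i, 0 ≤ u i := fun i => sub_nonneg.2 (le_abs_self _)
  have hz0 : ∀ i, z i = 0 := by
    by_cases hucase : ∀ k, u k = 0
    · -- z = |z| ≥ 0, sum zero
      have hznn : ∀ i, 0 ≤ z i := by
        intro i
        have := hucase i
        simp only [hudef, Pi.sub_apply] at this
        have : z i = |z i| := by linarith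
        rw [this]; exact abs_nonneg _
      intro i
      have h1 : ∀ j ∈ Finset.univ, 0 ≤ z j := fun j _ => hznn j
      exact (Finset.sum_eq_zero_iff_of_nonneg h1).1 hzsum i (Finset.mem_univ i)
    · push_neg at hucase
      obtain ⟨k, hk⟩ := hucase
      have hk' : 0 < u k := lt_of_le_of_ne (hu0 k) (Ne.symm hk)
      have hall : ∀ j, 0 < u j := pos_everywhere P hP hirr u hus hu0 k hk'
      have hneg : ∀ j, z j < 0 := by
        intro j
        have := hall j
        simp only [hudef, Pi.sub_apply] at this
        by_contra h
        push_neg at h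
        rw [abs_of_nonneg h] at this
        linarith
      exfalso
      have : ∑ i, z i < 0 := by
        have hne : (Finset.univ : Finset (Fin n)).Nonempty := ⟨k, Finset.mem_univ k⟩
        exact Finset.sum_neg (fun i _ => hneg i) hne
      linarith
  have : z = 0 := funext hz0
  have h2 : x - (∑ i, x i) • p = 0 := this
  exact sub_eq_zero.1 h2

noncomputable abbrev ofE {n : ℕ} : EuclideanSpace ℝ (Fin n) ≃ₗ[ℝ] (Fin n → ℝ) :=
  WithLp.linearEquiv 2 ℝ (Fin n → ℝ)

lemma euclNorm_eq_norm {n : ℕ} (x : EuclideanSpace ℝ (Fin n)) :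
    euclNorm (ofE x) = ‖x‖ := by
  rw [EuclideanSpace.norm_eq, euclNorm]
  congr 1
  exact Finset.sum_congr rfl fun i _ => by
    rw [Real.norm_eq_abs, sq_abs]
    rfl

lemma inner_eq_dot {n : ℕ} (x y : EuclideanSpace ℝ (Fin n)) :
    (inner ℝ x y : ℝ) = (ofE x) ⬝ᵥ (ofE y) := by
  rw [EuclideanSpace.inner_eq_star_dotProduct]
  simp [dotProduct, mul_comm]

lemma sum_sq_vecMul {n : ℕ} (A : Matrix (Fin n) (Fin n) ℝ) (x : Fin n → ℝ) :
    ∑ j, ((x ᵥ* A) j) ^ 2 = x ⬝ᵥ ((A * Aᵀ) *ᵥ x) := by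
  rw [Matrix.dotProduct_mulVec, ← Matrix.vecMul_vecMul, Matrix.vecMul_transpose]
  rw [dotProduct_comm, Matrix.dotProduct_mulVec]
  simp [dotProduct, sq]

lemma spectral_bound {n : ℕ} (A : Matrix (Fin n) (Fin n) ℝ) (σ : ℝ)
    (hσ : IsSmallestPosSingularValue A σ)
    (p : Fin n → ℝ)
    (hker : ∀ x : Fin n → ℝ, x ᵥ* A = 0 → ∃ c : ℝ, x = c • p)
    (q : EuclideanSpace ℝ (Fin n))
    (hq : q ∈ (Submodule.span ℝ {ofE.symm p})ᗮ) :
    σ * ‖q‖ ≤ euclNorm ((ofE q) ᵥ* A) := by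
  classical
  set M : Matrix (Fin n) (Fin n) ℝ := A * Aᵀ with hMdef
  have hMT : Mᵀ = M := by
    ext i j
    simp [hMdef, Matrix.mul_apply, Matrix.transpose_apply, mul_comm]
  have hM : M.IsHermitian := by
    have : Mᴴ = M := by
      ext i j
      simp [hMdef, Matrix.conjTranspose_apply, Matrix.mul_apply, Matrix.transpose_apply,
        mul_comm]
    exact this
  have hMsym : ∀ x y : Fin n → ℝ, x ⬝ᵥ (M *ᵥ y) = (M *ᵥ x) ⬝ᵥ y := by
    intro x y
    rw [Matrix.dotProduct_mulVec, ← Matrix.mulVec_transpose, hMT]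
  set b := hM.eigenvectorBasis with hbdef
  set μ := hM.eigenvalues with hμdef
  set v : Fin n → (Fin n → ℝ) := fun i => ofE (b i) with hvdef
  have heig : ∀ i, M *ᵥ (v i) = μ i • (v i) := by
    intro i
    have := hM.mulVec_eigenvectorBasis i
    simpa [hvdef, WithLp.linearEquiv_apply] using this
  set c : Fin n → ℝ := fun i => b.repr q i with hcdef
  have hc : ∀ i, c i = (v i) ⬝ᵥ (ofE q) := by
    intro i
    rw [hcdef]
    simp only [b.repr_apply_apply q i]
    exact inner_eq_dot (b i) q
  have hrepr : ofE q = ∑ i, c i • v i := by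
    have h := b.sum_repr q
    rw [← h, map_sum]
    exact Finset.sum_congr rfl fun i _ => map_smul _ _ _
  -- norm of q
  have hnormsq : ‖q‖ ^ 2 = ∑ i, c i ^ 2 := by
    have h1 : ‖q‖ = ‖b.repr q‖ := (b.repr.norm_map q).symm
    rw [h1, EuclideanSpace.norm_eq, Real.sq_sqrt (by positivity)]
    exact Finset.sum_congr rfl fun i _ => by rw [Real.norm_eq_abs, sq_abs]
  -- unit vectors
  have hvunit : ∀ i, (v i) ⬝ᵥ (v i) = 1 := by
    intro i
    have h1 : (inner ℝ (b i) (b i) : ℝ) = 1 := by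
      rw [real_inner_self_eq_norm_sq, b.orthonormal.1 i]; norm_num
    rw [← inner_eq_dot]; exact h1
  -- eigenvalues nonneg
  have hμnn : ∀ i, 0 ≤ μ i := by
    intro i
    have h1 : (v i) ⬝ᵥ (M *ᵥ (v i)) = μ i := by
      rw [heig i, dotProduct_smul, hvunit i]; simp
    rw [← h1, ← sum_sq_vecMul]
    positivity
  -- each i : either c i = 0 or σ^2 ≤ μ i
  have hdich : ∀ i, c i = 0 ∨ σ ^ 2 ≤ μ i := by
    intro i
    rcases eq_or_lt_of_le (hμnn i) with h0 | hpos
    · left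
      -- μ i = 0 : eigenvector in kernel
      have hMv : M *ᵥ (v i) = 0 := by rw [heig i, ← h0, zero_smul]
      have hsum0 : ∑ j, (((v i) ᵥ* A) j) ^ 2 = 0 := by
        rw [sum_sq_vecMul, hMv]; simp
      have hvA : (v i) ᵥ* A = 0 := by
        funext j
        have := (Finset.sum_eq_zero_iff_of_nonneg
          (fun j _ => sq_nonneg (((v i) ᵥ* A) j))).1 hsum0 j (Finset.mem_univ j)
        exact pow_eq_zero_iff (n := 2) (by norm_num) |>.1 this
      obtain ⟨c', hc'⟩ := hker (v i) hvA
      have hp0 : (inner ℝ (ofE.symm p) q : ℝ) = 0 :=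
        (Submodule.mem_orthogonal _ q).1 hq _ (Submodule.mem_span_singleton_self _)
      have : c i = c' * (inner ℝ (ofE.symm p) q : ℝ) := by
        rw [hc i, hc', inner_eq_dot, LinearEquiv.apply_symm_apply, smul_dotProduct]
        rfl
      rw [this, hp0, mul_zero]
    · right
      -- positive eigenvalue gives singular value
      have hvne : v i ≠ 0 := by
        intro h
        have := hvunit i
        rw [h] at this
        simp [dotProduct] at this
      have hsv : IsSingularValue A (Real.sqrt (μ i)) := by
        refine ⟨Real.sqrt_nonneg _, v i, hvne, ?_⟩
        rw [Real.sq_sqrt (le_of_lt hpos), ← hMdef]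
        rw [← Matrix.mulVec_transpose, hMT]
        exact heig i
      have hσle : σ ≤ Real.sqrt (μ i) := hσ.2.2 _ (Real.sqrt_pos.2 hpos) hsv
      calc σ ^ 2 ≤ Real.sqrt (μ i) ^ 2 := by
            apply pow_le_pow_left₀ (le_of_lt hσ.1) hσle
      _ = μ i := Real.sq_sqrt (le_of_lt hpos)
  -- key quadratic form identity
  have hkey : (ofE q) ⬝ᵥ (M *ᵥ (ofE q)) = ∑ i, μ i * c i ^ 2 := by
    set y : Fin n → ℝ := M *ᵥ (ofE q) with hy
    have hstep : ∀ i, (v i) ⬝ᵥ y = μ i * c i := by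
      intro i
      rw [hy, hMsym, heig i, smul_dotProduct, ← hc i]
      rfl
    have hexp : (ofE q) ⬝ᵥ y = ∑ i, c i * ((v i) ⬝ᵥ y) := by
      rw [hrepr]
      simp only [dotProduct, Finset.sum_apply, Pi.smul_apply, smul_eq_mul, Finset.sum_mul,
        Finset.mul_sum]
      rw [Finset.sum_comm]
      exact Finset.sum_congr rfl fun i _ => Finset.sum_congr rfl fun j _ => by ring
    rw [hexp]
    exact Finset.sum_congr rfl fun i _ => by rw [hstep i]; ring
  -- assemble
  have hlow : σ ^ 2 * ‖q‖ ^ 2 ≤ ∑ j, (((ofE q) ᵥ* A) j) ^ 2 := by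
    rw [sum_sq_vecMul, ← hMdef, hkey, hnormsq, Finset.mul_sum]
    refine Finset.sum_le_sum fun i _ => ?_
    rcases hdich i with h | h
    · simp [h]
    · exact mul_le_mul_of_nonneg_right h (sq_nonneg _)
  have h2 : σ * ‖q‖ = Real.sqrt (σ ^ 2 * ‖q‖ ^ 2) := by
    rw [Real.sqrt_mul (sq_nonneg _), Real.sqrt_sq (le_of_lt hσ.1), Real.sqrt_sq (norm_nonneg _)]
  rw [h2, euclNorm]
  exact Real.sqrt_le_sqrt hlow

lemma vecMul_matSmul {n : ℕ} (c : ℝ) (M : Matrix (Fin n) (Fin n) ℝ) (x : Fin n → ℝ) :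
    x ᵥ* (c • M) = c • (x ᵥ* M) := by
  funext j
  rw [vecMul_apply']
  simp only [Matrix.smul_apply, smul_eq_mul, Pi.smul_apply, vecMul_apply', Finset.mul_sum]
  exact Finset.sum_congr rfl fun i _ => by ring

set_option maxHeartbeats 1000000 in
/-- With σ the smallest nonzero singular value of I − P₀, for every
s ∈ [0,1], `‖π_s − π₀‖₂ ≤ (2 s n / σ) · ‖π_s (P₁ − P₀)‖₂`. -/
theorem stmt_10 {n : ℕ} (hn : 1 ≤ n) (P₀ P₁ : Matrix (Fin n) (Fin n) ℝ)
    (hP₀ : IsStochastic P₀) (hP₀i : MCIrreducible P₀) (hP₀a : MCAperiodic P₀)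
    (hP₁ : IsStochastic P₁) (hP₁i : MCIrreducible P₁) (hP₁a : MCAperiodic P₁)
    (π : ℝ → Fin n → ℝ)
    (hπ : ∀ t ∈ Set.Icc (0 : ℝ) 1, IsProbVec (π t) ∧ (π t) ᵥ* (Pt P₀ P₁ t) = π t)
    (σ : ℝ) (hσ : IsSmallestPosSingularValue (1 - P₀) σ)
    (s : ℝ) (hs : s ∈ Set.Icc (0 : ℝ) 1) :
    euclNorm (π s - π 0)
      ≤ (2 * s * (n : ℝ) / σ) * euclNorm ((π s) ᵥ* (P₁ - P₀)) := by
  obtain ⟨hs0, hs1⟩ := hs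
  obtain ⟨hπ0p, hπ0s⟩ := hπ 0 (by constructor <;> norm_num)
  obtain ⟨hπsp, hπss⟩ := hπ s ⟨hs0, hs1⟩
  have hPt0 : Pt P₀ P₁ 0 = P₀ := by simp [Pt]
  rw [hPt0] at hπ0s
  set A : Matrix (Fin n) (Fin n) ℝ := 1 - P₀ with hA
  set w : Fin n → ℝ := (π s) ᵥ* (P₁ - P₀) with hw
  have hπ0A : (π 0) ᵥ* A = 0 := by
    rw [hA, Matrix.vecMul_sub, Matrix.vecMul_one, hπ0s, sub_self]
  have hker : ∀ x : Fin n → ℝ, x ᵥ* A = 0 → ∃ c : ℝ, x = c • (π 0) := by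
    intro x hx
    rw [hA, Matrix.vecMul_sub, Matrix.vecMul_one, sub_eq_zero] at hx
    exact ⟨∑ i, x i, stationary_unique P₀ hP₀ hP₀i (π 0) hπ0p hπ0s x hx.symm⟩
  have hstat : (π s) ᵥ* P₀ + s • w = π s := by
    have h1 : (π s) ᵥ* ((1 - s) • P₀ + s • P₁) = π s := hπss
    rw [Matrix.vecMul_add, vecMul_matSmul, vecMul_matSmul, sub_smul, one_smul] at h1
    rw [hw, Matrix.vecMul_sub, smul_sub]
    calc (π s) ᵥ* P₀ + (s • ((π s) ᵥ* P₁) - s • ((π s) ᵥ* P₀))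
        = (π s) ᵥ* P₀ - s • ((π s) ᵥ* P₀) + s • ((π s) ᵥ* P₁) := by abel
    _ = π s := h1
  have hdA : (π s - π 0) ᵥ* A = s • w := by
    rw [Matrix.sub_vecMul, hπ0A, sub_zero, hA, Matrix.vecMul_sub, Matrix.vecMul_one]
    exact sub_eq_of_eq_add' hstat.symm
  -- Euclidean space setup
  set dE : EuclideanSpace ℝ (Fin n) := ofE.symm (π s - π 0) with hdE
  set p0E : EuclideanSpace ℝ (Fin n) := ofE.symm (π 0) with hp0E
  set K : Submodule ℝ (EuclideanSpace ℝ (Fin n)) := Submodule.span ℝ {p0E} with hK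
  set qE : EuclideanSpace ℝ (Fin n) := dE - (K.orthogonalProjection dE : EuclideanSpace ℝ (Fin n)) with hqE
  have hqmem : qE ∈ Kᗮ := Submodule.sub_starProjection_mem_orthogonal (K := K) dE
  obtain ⟨α, hα⟩ := Submodule.mem_span_singleton.1 (K.orthogonalProjection dE).2
  have hofEd : ofE dE = π s - π 0 := by rw [hdE]; exact ofE.apply_symm_apply _
  have hofEp : ofE ((K.orthogonalProjection dE : EuclideanSpace ℝ (Fin n))) = α • (π 0) := by
    rw [← hα, _root_.map_smul, hp0E, ofE.apply_symm_apply]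
  have hofEq : ofE qE = (π s - π 0) - α • (π 0) := by
    rw [hqE, _root_.map_sub, hofEd, hofEp]
  -- spectral bound
  have hq1 : σ * ‖qE‖ ≤ euclNorm ((ofE qE) ᵥ* A) := spectral_bound A σ hσ (π 0) hker qE hqmem
  have hqA : (ofE qE) ᵥ* A = s • w := by
    rw [hofEq, Matrix.sub_vecMul, hdA, Matrix.smul_vecMul, hπ0A, smul_zero, sub_zero]
  have heucl_smul : euclNorm (s • w) = s * euclNorm w := by
    rw [euclNorm, euclNorm]
    have : ∑ i, ((s • w) i) ^ 2 = s ^ 2 * ∑ i, (w i) ^ 2 := by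
      rw [Finset.mul_sum]
      exact Finset.sum_congr rfl fun i _ => by simp [mul_pow]
    rw [this, Real.sqrt_mul (sq_nonneg s), Real.sqrt_sq hs0]
  have hq2 : σ * ‖qE‖ ≤ s * euclNorm w := by
    rw [hqA, heucl_smul] at hq1
    exact hq1
  have hσpos := hσ.1
  have hQ : (0:ℝ) ≤ ‖qE‖ := norm_nonneg _
  have hW : (0:ℝ) ≤ euclNorm w := Real.sqrt_nonneg _
  have hqbound : ‖qE‖ ≤ s * euclNorm w / σ := by
    rw [le_div_iff₀ hσpos]
    nlinarith
  -- sum of qE entries is -α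
  have hsumπ : ∑ i, (π s - π 0) i = 0 := by
    simp [Pi.sub_apply, Finset.sum_sub_distrib, hπsp.2, hπ0p.2]
  have hsumq : ∑ i, (ofE qE) i = -α := by
    rw [hofEq]
    have hpt : ∀ i, (π s - π 0 - α • π 0) i = (π s - π 0) i - α * π 0 i := fun i => rfl
    rw [Finset.sum_congr rfl fun i _ => hpt i, Finset.sum_sub_distrib, hsumπ,
      ← Finset.mul_sum, hπ0p.2]
    ring
  -- |α| ≤ √n * ‖qE‖
  set ones : EuclideanSpace ℝ (Fin n) := ofE.symm (fun _ => 1) with hones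
  have hnones : ‖ones‖ = Real.sqrt n := by
    rw [EuclideanSpace.norm_eq]
    congr 1
    have : ∀ i : Fin n, ‖ones i‖ ^ 2 = 1 := fun i => by
      have : ones i = 1 := rfl
      rw [this]; norm_num
    rw [Finset.sum_congr rfl fun i _ => this i]
    simp
  have hinner : (inner ℝ ones qE : ℝ) = -α := by
    rw [inner_eq_dot, ← hsumq]
    have : ofE ones = fun _ => 1 := ofE.apply_symm_apply _
    rw [this]
    simp [dotProduct]
  have hαbound : |α| ≤ Real.sqrt n * ‖qE‖ := by
    have h1 := abs_real_inner_le_norm ones qE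
    rw [hinner, abs_neg, hnones] at h1
    exact h1
  -- ‖p0E‖ ≤ 1
  have hp0norm : ‖p0E‖ ≤ 1 := by
    rw [← euclNorm_eq_norm p0E, hp0E]
    have h0 : ofE (ofE.symm (π 0)) = π 0 := ofE.apply_symm_apply _
    rw [h0, euclNorm]
    have hle1 : ∀ i, π 0 i ≤ 1 := by
      intro i
      rw [← hπ0p.2]
      exact Finset.single_le_sum (fun j _ => hπ0p.1 j) (Finset.mem_univ i)
    have : ∑ i, (π 0 i) ^ 2 ≤ 1 := by
      calc ∑ i, (π 0 i) ^ 2 ≤ ∑ i, π 0 i :=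
            Finset.sum_le_sum fun i _ => by nlinarith [hπ0p.1 i, hle1 i]
      _ = 1 := hπ0p.2
    calc Real.sqrt (∑ i, (π 0 i) ^ 2) ≤ Real.sqrt 1 := Real.sqrt_le_sqrt this
    _ = 1 := Real.sqrt_one
  -- assemble
  have hdnorm : ‖dE‖ ≤ |α| + ‖qE‖ := by
    have : dE = (K.orthogonalProjection dE : EuclideanSpace ℝ (Fin n)) + qE := by
      rw [hqE]; abel
    rw [this]
    refine le_trans (norm_add_le _ _) ?_
    have : ‖(K.orthogonalProjection dE : EuclideanSpace ℝ (Fin n))‖ ≤ |α| := by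
      rw [← hα, norm_smul, Real.norm_eq_abs]
      nlinarith [abs_nonneg α, hp0norm, norm_nonneg p0E]
    linarith
  have hsqrtn : Real.sqrt n ≤ (n : ℝ) := by
    have h1 : (1:ℝ) ≤ (n:ℝ) := by exact_mod_cast hn
    have h2 := Real.sqrt_le_sqrt (show (n:ℝ) ≤ ((n:ℝ))^2 by nlinarith)
    rwa [Real.sqrt_sq (by positivity)] at h2
  have hfinal : ‖dE‖ ≤ (2 * s * (n : ℝ) / σ) * euclNorm w := by
    have h1 : ‖dE‖ ≤ (Real.sqrt n + 1) * ‖qE‖ := by nlinarith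
    have h2 : (Real.sqrt n + 1) * ‖qE‖ ≤ (Real.sqrt n + 1) * (s * euclNorm w / σ) :=
      mul_le_mul_of_nonneg_left hqbound (by positivity)
    have h3 : (Real.sqrt n + 1) * (s * euclNorm w / σ) ≤ (2 * s * (n:ℝ) / σ) * euclNorm w := by
      have e1 : (Real.sqrt n + 1) * (s * euclNorm w / σ)
          = ((Real.sqrt n + 1) * (s * euclNorm w)) / σ := by ring
      have e2 : (2 * s * (n:ℝ) / σ) * euclNorm w = (2 * s * (n:ℝ) * euclNorm w) / σ := by ring
      rw [e1, e2]
      apply (div_le_div_iff_of_pos_right hσpos).2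
      have hc : Real.sqrt n + 1 ≤ 2 * (n:ℝ) := by
        nlinarith [hsqrtn, (show (1:ℝ) ≤ (n:ℝ) by exact_mod_cast hn)]
      nlinarith [mul_le_mul_of_nonneg_right hc (mul_nonneg hs0 hW)]
    linarith
  rw [show euclNorm (π s - π 0) = ‖dE‖ from by rw [← euclNorm_eq_norm dE, hofEd]]
  exact hfinal
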